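/- Let X be a completely regular Hausdorff (Tychonoff) space and let G be a closed ideal of C_B(X). Then the following are equivalent: (1) the subspace λ_G X of βX is Lindelöf; (2) λ_G X is σ-compact; (3) G equals the closure in C_B(X) of the principal ideal ⟨g⟩ generated by some element g of G. -/

import Mathlib

open BoundedContinuousFunction Set Filter Topology

section Preamble

variable {X : Type*} [TopologicalSpace X] {𝕜 : Type*} [RCLike 𝕜]

theorem betaExt_aux (f : X →ᵇ 𝕜) :
    Continuous (fun x => (⟨f x, by
      simpa [Metric.mem_closedBall, dist_zero_right] using f.norm_coe_le_norm x⟩ :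
        Metric.closedBall (0 : 𝕜) ‖f‖)) :=
  f.continuous.subtype_mk _

/-- `f_β`, the unique continuous extension of a bounded continuous function `f : X → 𝕜` to the
Stone–Čech compactification `βX`. -/
noncomputable def betaExt (f : X →ᵇ 𝕜) : StoneCech X → 𝕜 :=
  haveI : CompactSpace (Metric.closedBall (0 : 𝕜) ‖f‖) :=
    isCompact_iff_compactSpace.mp (isCompact_closedBall 0 ‖f‖)
  fun p => (stoneCechExtend (betaExt_aux f) p).1

theorem betaExt_unit (f : X →ᵇ 𝕜) (x : X) : betaExt f (stoneCechUnit x) = f x := by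
  haveI : CompactSpace (Metric.closedBall (0 : 𝕜) ‖f‖) :=
    isCompact_iff_compactSpace.mp (isCompact_closedBall 0 ‖f‖)
  exact congrArg Subtype.val (congrFun (stoneCechExtend_extends (betaExt_aux f)) x)

theorem continuous_betaExt (f : X →ᵇ 𝕜) : Continuous (betaExt f) := by
  haveI : CompactSpace (Metric.closedBall (0 : 𝕜) ‖f‖) :=
    isCompact_iff_compactSpace.mp (isCompact_closedBall 0 ‖f‖)
  exact continuous_subtype_val.comp (continuous_stoneCechExtend _)

/-- `λ_G X`, the union over `g ∈ G` of the cozero-sets in `βX` of the extensions `g_β`. -/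
def lambdaSet (G : Ideal (X →ᵇ 𝕜)) : Set (StoneCech X) :=
  ⋃ g ∈ G, {p | betaExt g p ≠ 0}

end Preamble

/-! ### Auxiliary lemmas -/

section Aux

set_option linter.unusedSectionVars false
set_option maxHeartbeats 800000

variable {X : Type*} [TopologicalSpace X] {𝕜 : Type*} [RCLike 𝕜]

theorem betaExt_norm_le (f : X →ᵇ 𝕜) (p : StoneCech X) : ‖betaExt f p‖ ≤ ‖f‖ := by
  haveI : CompactSpace (Metric.closedBall (0 : 𝕜) ‖f‖) :=
    isCompact_iff_compactSpace.mp (isCompact_closedBall 0 ‖f‖)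
  have h2 := (stoneCechExtend (betaExt_aux f) p).2
  rw [Metric.mem_closedBall, dist_zero_right] at h2
  exact h2

theorem betaExt_eq_of {f : X →ᵇ 𝕜} {F : StoneCech X → 𝕜} (hF : Continuous F)
    (h : ∀ x, F (stoneCechUnit x) = f x) : F = betaExt f := by
  apply hF.ext_on denseRange_stoneCechUnit (continuous_betaExt f)
  rintro _ ⟨x, rfl⟩
  rw [h x, betaExt_unit]

theorem betaExt_mul (f g : X →ᵇ 𝕜) : betaExt (f * g) = betaExt f * betaExt g := by
  refine (betaExt_eq_of ((continuous_betaExt f).mul (continuous_betaExt g)) ?_).symm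
  intro x
  simp [betaExt_unit]

theorem betaExt_sub (f g : X →ᵇ 𝕜) : betaExt (f - g) = betaExt f - betaExt g := by
  refine (betaExt_eq_of ((continuous_betaExt f).sub (continuous_betaExt g)) ?_).symm
  intro x
  simp [betaExt_unit]

variable [T35Space X]

/-- Key approximation: if the cozero set of `f_β` is contained in that of `g_β`,
then `f` lies in the closure of the ideal generated by `g`. -/
theorem mem_closure_span_of_coz_subset (g f : X →ᵇ 𝕜)
    (hcoz : ∀ p, betaExt f p ≠ 0 → betaExt g p ≠ 0) :
    f ∈ closure ((Ideal.span {g} : Ideal (X →ᵇ 𝕜)) : Set (X →ᵇ 𝕜)) := by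
  rw [Metric.mem_closure_iff]
  intro ε hε
  set K : Set (StoneCech X) := {p | ε/2 ≤ ‖betaExt f p‖} with hK
  have hKclosed : IsClosed K :=
    isClosed_le continuous_const ((continuous_betaExt f).norm)
  have hKcomp : IsCompact K := hKclosed.isCompact
  obtain ⟨c, hc, hcK⟩ : ∃ c : ℝ, 0 < c ∧ ∀ p ∈ K, c ≤ ‖betaExt g p‖^2 := by
    rcases K.eq_empty_or_nonempty with hKe | hKne
    · exact ⟨1, one_pos, by simp [hKe]⟩
    · obtain ⟨p0, hp0K, hmin⟩ := hKcomp.exists_isMinOn hKne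
        (((continuous_betaExt g).norm.pow 2).continuousOn)
      refine ⟨‖betaExt g p0‖^2, ?_, fun p hp => hmin hp⟩
      have hf0 : betaExt f p0 ≠ 0 := by
        intro h0
        have := hp0K
        rw [hK, mem_setOf_eq, h0, norm_zero] at this
        linarith
      exact pow_pos (norm_pos_iff.mpr (hcoz p0 hf0)) 2
  set D : X → ℝ := fun x => max (‖g x‖^2) c with hD
  have hDpos : ∀ x, 0 < D x := fun x => lt_max_of_lt_right hc
  have hDcont : Continuous D := ((g.continuous.norm.pow 2)).max continuous_const
  set A : X → 𝕜 := fun x => f x * (starRingEnd 𝕜) (g x) / ((D x : ℝ) : 𝕜) with hA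
  have hAcont : Continuous A := by
    apply (f.continuous.mul (RCLike.continuous_conj.comp g.continuous)).div
      (RCLike.continuous_ofReal.comp hDcont)
    intro x
    simpa using (hDpos x).ne'
  have hAbd : ∀ x, ‖A x‖ ≤ ‖f‖ * ‖g‖ / c := by
    intro x
    rw [hA]
    simp only [norm_div, norm_mul, RCLike.norm_conj, RCLike.norm_ofReal,
      abs_of_pos (hDpos x)]
    apply div_le_div₀ (by positivity)
      (mul_le_mul (f.norm_coe_le_norm x) (g.norm_coe_le_norm x) (norm_nonneg _)
        (norm_nonneg f)) hc (le_max_right _ _)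
  set a : X →ᵇ 𝕜 := BoundedContinuousFunction.ofNormedAddCommGroup A hAcont
    (‖f‖ * ‖g‖ / c) hAbd with ha
  refine ⟨a * g, Ideal.mem_span_singleton.mpr (dvd_mul_left g a), ?_⟩
  rw [dist_eq_norm]
  have hbound : ‖f - a * g‖ ≤ ε/2 :=
    (BoundedContinuousFunction.norm_le (by linarith)).mpr (by
      intro x
      simp only [BoundedContinuousFunction.coe_sub, BoundedContinuousFunction.coe_mul,
        Pi.sub_apply, Pi.mul_apply]
      have hax : a x = A x := rfl
      rw [hax, hA]
      have hDx : (0:ℝ) < D x := hDpos x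
      have key : f x - f x * (starRingEnd 𝕜) (g x) / ((D x : ℝ) : 𝕜) * g x
          = f x * (((1 - ‖g x‖^2 / D x : ℝ)) : 𝕜) := by
        have h1 : f x * (starRingEnd 𝕜) (g x) / ((D x : ℝ) : 𝕜) * g x
            = f x * ((‖g x‖^2 / D x : ℝ) : 𝕜) := by
          rw [div_mul_eq_mul_div, mul_assoc, RCLike.conj_mul]
          push_cast
          ring
        rw [h1]
        push_cast
        ring
      rw [key, norm_mul, RCLike.norm_ofReal]
      by_cases hxK : stoneCechUnit x ∈ K
      · have hc' : c ≤ ‖g x‖^2 := by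
          have := hcK _ hxK
          rwa [betaExt_unit] at this
        have hDeq : D x = ‖g x‖^2 := max_eq_left hc'
        have hgx : (0:ℝ) < ‖g x‖^2 := lt_of_lt_of_le hc hc'
        rw [hDeq, div_self hgx.ne']
        simp
        linarith
      · have hfx : ‖f x‖ < ε/2 := by
          rw [hK, mem_setOf_eq, betaExt_unit, not_le] at hxK
          exact hxK
        have ht1 : ‖g x‖^2 / D x ≤ 1 := div_le_one_of_le₀ (le_max_left _ _) hDx.le
        have ht0 : 0 ≤ ‖g x‖^2 / D x := by positivity
        have habs : |1 - ‖g x‖^2 / D x| ≤ 1 := by rw [abs_le]; constructor <;> linarith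
        calc ‖f x‖ * |1 - ‖g x‖^2 / D x| ≤ ‖f x‖ * 1 :=
              mul_le_mul_of_nonneg_left habs (norm_nonneg _)
          _ ≤ ε/2 := by rw [mul_one]; exact hfx.le
      )
  linarith

/-- From a countable family in the ideal, produce a single element of the ideal whose
extension's cozero set contains all of theirs. -/
theorem exists_dominator (G : Ideal (X →ᵇ 𝕜)) (hcl : IsClosed (G : Set (X →ᵇ 𝕜)))
    (gs : ℕ → X →ᵇ 𝕜) (hmem : ∀ n, gs n ∈ G) :
    ∃ g ∈ G, ∀ n p, betaExt (gs n) p ≠ 0 → betaExt g p ≠ 0 := by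
  set c : ℕ → ℝ := fun n => ((2:ℝ)^n * (‖gs n‖^2 + 1))⁻¹ with hc
  have hcpos : ∀ n, 0 < c n := fun n => by positivity
  set u : ℕ → X →ᵇ 𝕜 := fun n => ((c n : ℝ) : 𝕜) • (gs n * star (gs n)) with hu
  have humem : ∀ n, u n ∈ G := fun n =>
    Submodule.smul_of_tower_mem G _ (Ideal.mul_mem_right _ G (hmem n))
  have hub : ∀ n, ‖u n‖ ≤ (1/2:ℝ)^n := by
    intro n
    rw [hu]
    simp only [norm_smul, RCLike.norm_ofReal, abs_of_pos (hcpos n)]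
    have h1 : ‖gs n * star (gs n)‖ ≤ ‖gs n‖^2 + 1 := by
      calc ‖gs n * star (gs n)‖ ≤ ‖gs n‖ * ‖star (gs n)‖ := norm_mul_le _ _
        _ = ‖gs n‖^2 := by rw [norm_star]; ring
        _ ≤ ‖gs n‖^2 + 1 := by linarith
    calc c n * ‖gs n * star (gs n)‖ ≤ c n * (‖gs n‖^2 + 1) :=
          mul_le_mul_of_nonneg_left h1 (hcpos n).le
      _ = (2^n)⁻¹ := by
          rw [hc]
          have : (0:ℝ) < ‖gs n‖^2 + 1 := by positivity
          field_simp
      _ = (1/2:ℝ)^n := by rw [one_div, inv_pow]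
  have hsum : Summable u := Summable.of_norm_bounded summable_geometric_two hub
  set g : X →ᵇ 𝕜 := ∑' n, u n with hg
  have hgG : g ∈ G := by
    refine hcl.mem_of_tendsto hsum.hasSum.tendsto_sum_nat (Eventually.of_forall fun N => ?_)
    exact Ideal.sum_mem G fun n _ => humem n
  refine ⟨g, hgG, fun n p hp => ?_⟩
  have hux : ∀ m x, u m x = ((c m * ‖gs m x‖^2 : ℝ) : 𝕜) := by
    intro m x
    rw [hu]
    simp only [BoundedContinuousFunction.coe_smul, Pi.smul_apply,
      BoundedContinuousFunction.coe_mul, Pi.mul_apply]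
    rw [BoundedContinuousFunction.star_apply]
    rw [smul_eq_mul, RCLike.star_def, RCLike.mul_conj]
    push_cast
    ring
  have hX : ∀ x : X, c n * ‖gs n x‖^2 ≤ RCLike.re (g x) := by
    intro x
    have hsx : HasSum (fun m => u m x) (g x) := by
      have h2 := ((continuous_eval_const (F := X →ᵇ 𝕜) x).tendsto g).comp
        hsum.hasSum
      simpa [HasSum, Function.comp_def, BoundedContinuousFunction.coe_sum] using h2
    have hresum : HasSum (fun m => RCLike.re (u m x)) (RCLike.re (g x)) :=
      hsx.mapL (RCLike.reCLM (K := 𝕜))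
    have hre : RCLike.re (g x) = ∑' m, RCLike.re (u m x) := hresum.tsum_eq.symm
    have hres : Summable fun m => RCLike.re (u m x) := hresum.summable
    have hterm : ∀ m, RCLike.re (u m x) = c m * ‖gs m x‖^2 := by
      intro m; rw [hux m x]; exact RCLike.ofReal_re _
    rw [hre, ← hterm n]
    exact Summable.le_tsum hres n (fun j _ => by rw [hterm j]; positivity)
  have hβ : ∀ q : StoneCech X, c n * ‖betaExt (gs n) q‖^2 ≤ RCLike.re (betaExt g q) := by
    intro q
    refine denseRange_stoneCechUnit.induction_on q ?_ ?_
    · exact isClosed_le (continuous_const.mul (((continuous_betaExt (gs n)).norm).pow 2))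
        ((RCLike.continuous_re).comp (continuous_betaExt g))
    · intro x
      rw [betaExt_unit, betaExt_unit]
      exact hX x
  intro h0
  have hble := hβ p
  rw [h0, map_zero] at hble
  have hpos : 0 < c n * ‖betaExt (gs n) p‖^2 := by
    have h1 := norm_pos_iff.mpr hp
    have h2 := hcpos n
    positivity
  linarith

/-- An element of the closure of the ideal generated by `g` has its extension vanishing
wherever `g_β` vanishes. -/
theorem betaExt_eq_zero_of_mem_closure_span {g h : X →ᵇ 𝕜}
    (hh : h ∈ closure ((Ideal.span {g} : Ideal (X →ᵇ 𝕜)) : Set (X →ᵇ 𝕜)))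
    {p : StoneCech X} (hg0 : betaExt g p = 0) : betaExt h p = 0 := by
  set Z : Set (X →ᵇ 𝕜) := {u | betaExt u p = 0} with hZ
  have hlip : LipschitzWith 1 (fun u : X →ᵇ 𝕜 => betaExt u p) := by
    apply LipschitzWith.of_dist_le_mul
    intro u v
    rw [NNReal.coe_one, one_mul, dist_eq_norm, dist_eq_norm]
    have := betaExt_norm_le (u - v) p
    rwa [betaExt_sub, Pi.sub_apply] at this
  have hZclosed : IsClosed Z := isClosed_singleton.preimage hlip.continuous
  have hsub : ((Ideal.span {g} : Ideal (X →ᵇ 𝕜)) : Set (X →ᵇ 𝕜)) ⊆ Z := by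
    intro u hu
    obtain ⟨a, rfl⟩ := Ideal.mem_span_singleton.mp hu
    show betaExt (g * a) p = 0
    rw [betaExt_mul, Pi.mul_apply, hg0, zero_mul]
  exact closure_minimal hsub hZclosed hh

end Aux

set_option maxHeartbeats 800000 in
/-- For a Tychonoff space `X` and a closed ideal `G` of `C_B(X)`, the following are
equivalent: (1) `λ_G X` is Lindelöf; (2) `λ_G X` is σ-compact; (3) `G` is the closure in
`C_B(X)` of a principal ideal `⟨g⟩` for some `g ∈ G`. -/
theorem lindelof_tfae {X : Type*} [TopologicalSpace X] [T35Space X]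
    {𝕜 : Type*} [RCLike 𝕜] (G : Ideal (X →ᵇ 𝕜))
    (hcl : IsClosed (G : Set (X →ᵇ 𝕜))) :
    List.TFAE
      [LindelofSpace (lambdaSet G),
       SigmaCompactSpace (lambdaSet G),
       ∃ g ∈ G, (G : Set (X →ᵇ 𝕜)) =
         closure ((Ideal.span {g} : Ideal (X →ᵇ 𝕜)) : Set (X →ᵇ 𝕜))] := by
  tfae_have 2 → 1 := by
    intro h
    infer_instance
  tfae_have 1 → 3 := by
    intro h1
    -- `λ_G X` is a Lindelöf subset of `βX`
    have hS : IsLindelof (lambdaSet G) := by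
      have := (isLindelof_univ (X := ↥(lambdaSet G))).image continuous_subtype_val
      simpa using this
    -- extract a countable subfamily of `G` whose cozero sets cover `λ_G X`
    obtain ⟨gs, hgsmem, hgscov⟩ : ∃ gs : ℕ → X →ᵇ 𝕜, (∀ n, gs n ∈ G) ∧
        ∀ p ∈ lambdaSet G, ∃ n, betaExt (gs n) p ≠ 0 := by
      have hcov : lambdaSet G ⊆ ⋃ i : {u : X →ᵇ 𝕜 // u ∈ G}, {p | betaExt (i : X →ᵇ 𝕜) p ≠ 0} := by
        intro p hp
        obtain ⟨g, hg, hgp⟩ := mem_iUnion₂.mp hp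
        exact mem_iUnion.mpr ⟨⟨g, hg⟩, hgp⟩
      obtain ⟨r, hrc, hrcov⟩ := hS.elim_countable_subcover
        (fun i : {u : X →ᵇ 𝕜 // u ∈ G} => {p | betaExt (i : X →ᵇ 𝕜) p ≠ 0})
        (fun i => isOpen_compl_singleton.preimage (continuous_betaExt _)) hcov
      rcases r.eq_empty_or_nonempty with he | hne
      · refine ⟨fun _ => 0, fun _ => zero_mem G, fun p hp => absurd (hrcov hp) (by simp [he])⟩
      · obtain ⟨e, he⟩ := hrc.exists_eq_range hne
        refine ⟨fun n => (e n : X →ᵇ 𝕜), fun n => (e n).2, fun p hp => ?_⟩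
        have := hrcov hp
        rw [he, biUnion_range] at this
        obtain ⟨n, hn⟩ := mem_iUnion.mp this
        exact ⟨n, hn⟩
    obtain ⟨g, hgG, hdom⟩ := exists_dominator G hcl gs hgsmem
    refine ⟨g, hgG, ?_⟩
    apply Subset.antisymm
    · intro f hf
      apply mem_closure_span_of_coz_subset
      intro p hfp
      have hpS : p ∈ lambdaSet G := mem_iUnion₂.mpr ⟨f, hf, hfp⟩
      obtain ⟨n, hn⟩ := hgscov p hpS
      exact hdom n p hn
    · have h1 : ((Ideal.span {g} : Ideal (X →ᵇ 𝕜)) : Set (X →ᵇ 𝕜)) ⊆ (G : Set (X →ᵇ 𝕜)) :=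
        Ideal.span_le.mpr (by simpa using hgG)
      calc closure ((Ideal.span {g} : Ideal (X →ᵇ 𝕜)) : Set (X →ᵇ 𝕜))
          ⊆ closure (G : Set (X →ᵇ 𝕜)) := closure_mono h1
        _ = (G : Set (X →ᵇ 𝕜)) := hcl.closure_eq
  tfae_have 3 → 2 := by
    rintro ⟨g, hgG, hGeq⟩
    have hSeq : lambdaSet G = {p | betaExt g p ≠ 0} := by
      apply Subset.antisymm
      · intro p hp
        obtain ⟨h, hhG, hhp⟩ := mem_iUnion₂.mp hp
        intro h0
        apply hhp
        have hhcl : h ∈ closure ((Ideal.span {g} : Ideal (X →ᵇ 𝕜)) : Set (X →ᵇ 𝕜)) := by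
          rw [← hGeq]; exact hhG
        exact betaExt_eq_zero_of_mem_closure_span hhcl h0
      · intro p hp
        exact mem_iUnion₂.mpr ⟨g, hgG, hp⟩
    have hsc : IsSigmaCompact (lambdaSet G) := by
      rw [hSeq]
      refine ⟨fun n => {p | (1:ℝ)/(n+1) ≤ ‖betaExt g p‖},
        fun n => (isClosed_le continuous_const (continuous_betaExt g).norm).isCompact, ?_⟩
      ext p
      simp only [mem_iUnion, mem_setOf_eq]
      constructor
      · rintro ⟨n, hn⟩ h0
        rw [h0, norm_zero] at hn
        have : (0:ℝ) < 1/(n+1) := by positivity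
        linarith
      · intro hne
        obtain ⟨n, hn⟩ := exists_nat_one_div_lt (norm_pos_iff.mpr hne)
        exact ⟨n, hn.le⟩
    exact isSigmaCompact_iff_sigmaCompactSpace.mp hsc
  tfae_finish
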